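/- Let A, B ⊂ ℤⁿ be non-empty finite sets. Then |A + B + {0,1}ⁿ|^{1/n} ≥ |A|^{1/n} + |B|^{1/n}, where {0,1}ⁿ is the set of vertices of the unit lattice cube. -/

import Mathlib

open Set MeasureTheory
open scoped Pointwise ENNReal

namespace BM18

variable {n : ℕ}

abbrev Box (n : ℕ) := (Fin n → ℝ) × (Fin n → ℝ)

def bset (b : Box n) : Set (Fin n → ℝ) := univ.pi fun i => Ico (b.1 i) (b.2 i)

def nondeg (b : Box n) : Prop := ∀ i, b.1 i < b.2 i

noncomputable def rvol (b : Box n) : ℝ := ∏ i, (b.2 i - b.1 i)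

lemma rvol_pos {b : Box n} (hb : nondeg b) : 0 < rvol b :=
  Finset.prod_pos fun i _ => sub_pos.2 (hb i)

lemma bset_measurable (b : Box n) : MeasurableSet (bset b) :=
  MeasurableSet.univ_pi fun i => measurableSet_Ico

lemma volume_bset {b : Box n} (hb : nondeg b) : volume (bset b) = ENNReal.ofReal (rvol b) := by
  rw [bset, volume_pi_pi]
  simp only [Real.volume_Ico, rvol]
  exact (ENNReal.ofReal_prod_of_nonneg fun i _ => sub_nonneg.2 (hb i).le).symm

lemma Ico_add_Ico {a b c d : ℝ} (h1 : a < b) (h2 : c < d) :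
    Ico a b + Ico c d = Ico (a + c) (b + d) := by
  ext x
  simp only [Set.mem_add, mem_Ico]
  constructor
  · rintro ⟨p, ⟨hp1, hp2⟩, q, ⟨hq1, hq2⟩, rfl⟩
    constructor <;> linarith
  · rintro ⟨hx1, hx2⟩
    rcases lt_or_ge (x - d) a with h | h
    · exact ⟨a, ⟨le_refl a, h1⟩, x - a, ⟨by linarith, by linarith⟩, by ring⟩
    · set m := min b (x - c) with hm
      have hm1 : m ≤ b := min_le_left _ _
      have hm2 : m ≤ x - c := min_le_right _ _
      have hlt : x - d < m := lt_min (by linarith) (by linarith)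
      refine ⟨(x - d + m) / 2, ⟨by linarith, by linarith⟩,
        x - (x - d + m) / 2, ⟨by linarith, by linarith⟩, by ring⟩

lemma pi_add_pi (s t : Fin n → Set ℝ) :
    (univ.pi s) + (univ.pi t) = univ.pi (fun i => s i + t i) := by
  ext x
  constructor
  · rintro ⟨a, ha, b, hb, rfl⟩ i _
    exact ⟨a i, ha i trivial, b i, hb i trivial, rfl⟩
  · intro hx
    choose a ha b hb hab using fun i => hx i trivial
    exact ⟨a, fun i _ => ha i, b, fun i _ => hb i, funext fun i => hab i⟩

lemma bset_add_bset {b c : Box n} (hb : nondeg b) (hc : nondeg c) :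
    bset b + bset c = bset (b.1 + c.1, b.2 + c.2) := by
  rw [bset, bset, pi_add_pi, bset]
  exact congrArg (Set.pi univ) (funext fun i => Ico_add_Ico (hb i) (hc i))



noncomputable def phi (n : ℕ) (x y : ℝ) : ℝ := (x ^ (n:ℝ)⁻¹ + y ^ (n:ℝ)⁻¹) ^ (n:ℝ)

variable {n : ℕ}

lemma phi_nonneg {x y : ℝ} (hx : 0 ≤ x) (hy : 0 ≤ y) : 0 ≤ phi n x y :=
  Real.rpow_nonneg
    (add_nonneg (Real.rpow_nonneg hx _) (Real.rpow_nonneg hy _)) _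

lemma rpow_inv_phi (hn : 0 < n) {x y : ℝ} (hx : 0 ≤ x) (hy : 0 ≤ y) :
    phi n x y ^ (n:ℝ)⁻¹ = x ^ (n:ℝ)⁻¹ + y ^ (n:ℝ)⁻¹ := by
  have hs : 0 ≤ x ^ (n:ℝ)⁻¹ + y ^ (n:ℝ)⁻¹ :=
    add_nonneg (Real.rpow_nonneg hx _) (Real.rpow_nonneg hy _)
  rw [phi, ← Real.rpow_mul hs, mul_inv_cancel₀ (by positivity), Real.rpow_one]

lemma phi_smul (hn : 0 < n) {θ x y : ℝ} (hθ : 0 ≤ θ) (hx : 0 ≤ x) (hy : 0 ≤ y) :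
    phi n (θ * x) (θ * y) = θ * phi n x y := by
  have hs : 0 ≤ x ^ (n:ℝ)⁻¹ + y ^ (n:ℝ)⁻¹ :=
    add_nonneg (Real.rpow_nonneg hx _) (Real.rpow_nonneg hy _)
  rw [phi, Real.mul_rpow hθ hx, Real.mul_rpow hθ hy, ← mul_add,
    Real.mul_rpow (Real.rpow_nonneg hθ _) hs, ← Real.rpow_mul hθ,
    inv_mul_cancel₀ (by positivity : (n:ℝ) ≠ 0), Real.rpow_one, phi]

lemma phi_prod_le (hn : 0 < n) {a b : Fin n → ℝ} (ha : ∀ i, 0 < a i) (hb : ∀ i, 0 < b i) :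
    phi n (∏ i, a i) (∏ i, b i) ≤ ∏ i, (a i + b i) := by
  set c : Fin n → ℝ := fun i => a i + b i with hc
  have hcp : ∀ i, 0 < c i := fun i => add_pos (ha i) (hb i)
  have hT : (0:ℝ) < (∏ i, c i) ^ (n:ℝ)⁻¹ :=
    Real.rpow_pos_of_pos (Finset.prod_pos fun i _ => hcp i) _
  have hw : ∑ _i : Fin n, (n:ℝ)⁻¹ = 1 := by
    rw [Finset.sum_const, Finset.card_univ, Fintype.card_fin, nsmul_eq_mul,
      mul_inv_cancel₀ (by positivity : (n:ℝ) ≠ 0)]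
  have key : ∀ (f : Fin n → ℝ), (∀ i, 0 < f i) → (∀ i, f i ≤ c i) →
      (∏ i, f i) ^ (n:ℝ)⁻¹ = (∏ i, (f i / c i) ^ ((n:ℝ)⁻¹)) * (∏ i, c i) ^ (n:ℝ)⁻¹ := by
    intro f hf hfc
    rw [Real.finset_prod_rpow _ _ (fun i _ => (div_nonneg (hf i).le (hcp i).le)) _,
      ← Real.mul_rpow (Finset.prod_nonneg fun i _ => div_nonneg (hf i).le (hcp i).le)
        (Finset.prod_nonneg fun i _ => (hcp i).le), ← Finset.prod_mul_distrib]
    congr 1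
    exact Finset.prod_congr rfl fun i _ => (div_mul_cancel₀ _ (hcp i).ne').symm
  have amgm : ∀ (f : Fin n → ℝ), (∀ i, 0 < f i) →
      ∏ i, (f i / c i) ^ ((n:ℝ)⁻¹) ≤ ∑ i, (n:ℝ)⁻¹ * (f i / c i) :=
    fun f hf => Real.geom_mean_le_arith_mean_weighted Finset.univ _ _
      (fun i _ => by positivity) hw (fun i _ => (div_nonneg (hf i).le (hcp i).le))
  have hsum : (∑ i, (n:ℝ)⁻¹ * (a i / c i)) + (∑ i, (n:ℝ)⁻¹ * (b i / c i)) = 1 := by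
    rw [← Finset.sum_add_distrib, ← hw]
    refine Finset.sum_congr rfl fun i _ => ?_
    rw [← mul_add, ← add_div, div_self (hcp i).ne']
    ring
  have hXY : (∏ i, (a i / c i) ^ ((n:ℝ)⁻¹)) + (∏ i, (b i / c i) ^ ((n:ℝ)⁻¹)) ≤ 1 := by
    have := add_le_add (amgm a ha) (amgm b hb)
    rw [hsum] at this; exact this
  have hS : (∏ i, a i) ^ (n:ℝ)⁻¹ + (∏ i, b i) ^ (n:ℝ)⁻¹ ≤ (∏ i, c i) ^ (n:ℝ)⁻¹ := by
    rw [key a ha (fun i => le_add_of_nonneg_right (hb i).le),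
      key b hb (fun i => le_add_of_nonneg_left (ha i).le), ← add_mul]
    exact (mul_le_mul_of_nonneg_right hXY hT.le).trans_eq (one_mul _)
  calc phi n (∏ i, a i) (∏ i, b i)
      ≤ ((∏ i, c i) ^ (n:ℝ)⁻¹) ^ (n:ℝ) := by
        refine Real.rpow_le_rpow ?_ hS (Nat.cast_nonneg n)
        exact add_nonneg (Real.rpow_nonneg (Finset.prod_nonneg fun i _ => (ha i).le) _)
          (Real.rpow_nonneg (Finset.prod_nonneg fun i _ => (hb i).le) _)
    _ = ∏ i, c i := by
        rw [← Real.rpow_mul (Finset.prod_nonneg fun i _ => (hcp i).le),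
          inv_mul_cancel₀ (by positivity : (n:ℝ) ≠ 0), Real.rpow_one]

noncomputable def vol (L : List (Box n)) : ℝ := (L.map rvol).sum

def bunion (L : List (Box n)) : Set (Fin n → ℝ) := ⋃ b ∈ {b | b ∈ L}, bset b

lemma mem_bunion {L : List (Box n)} {x} : x ∈ bunion L ↔ ∃ b ∈ L, x ∈ bset b := by
  simp [bunion]

noncomputable def cutlo (i : Fin n) (t : ℝ) (b : Box n) : Option (Box n) :=
  if b.1 i < min (b.2 i) t then some (b.1, Function.update b.2 i (min (b.2 i) t)) else none

noncomputable def cuthi (i : Fin n) (t : ℝ) (b : Box n) : Option (Box n) :=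
  if max (b.1 i) t < b.2 i then some (Function.update b.1 i (max (b.1 i) t), b.2) else none

noncomputable def lo (i : Fin n) (t : ℝ) (L : List (Box n)) : List (Box n) :=
  L.filterMap (cutlo i t)

noncomputable def hi (i : Fin n) (t : ℝ) (L : List (Box n)) : List (Box n) :=
  L.filterMap (cuthi i t)

lemma cutlo_sub {i t} {b b' : Box n} (h : b' ∈ cutlo i t b) : bset b' ⊆ bset b := by
  rw [cutlo] at h
  split_ifs at h with hc
  · obtain rfl : _ = b' := Option.some_inj.mp h
    refine Set.pi_mono fun j _ => ?_
    rcases eq_or_ne j i with rfl | hj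
    · simp only [Function.update_self]
      exact Ico_subset_Ico le_rfl (min_le_left _ _)
    · simp [Function.update_of_ne hj]
  · simp at h

lemma cuthi_sub {i t} {b b' : Box n} (h : b' ∈ cuthi i t b) : bset b' ⊆ bset b := by
  rw [cuthi] at h
  split_ifs at h with hc
  · obtain rfl : _ = b' := Option.some_inj.mp h
    refine Set.pi_mono fun j _ => ?_
    rcases eq_or_ne j i with rfl | hj
    · simp only [Function.update_self]
      exact Ico_subset_Ico (le_max_left _ _) le_rfl
    · simp [Function.update_of_ne hj]
  · simp at h

lemma cutlo_nondeg {i t} {b b' : Box n} (hb : nondeg b) (h : b' ∈ cutlo i t b) : nondeg b' := by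
  rw [cutlo] at h
  split_ifs at h with hc
  · obtain rfl : _ = b' := Option.some_inj.mp h
    intro j
    rcases eq_or_ne j i with rfl | hj
    · simpa using hc
    · simpa [Function.update_of_ne hj] using hb j
  · simp at h

lemma cuthi_nondeg {i t} {b b' : Box n} (hb : nondeg b) (h : b' ∈ cuthi i t b) : nondeg b' := by
  rw [cuthi] at h
  split_ifs at h with hc
  · obtain rfl : _ = b' := Option.some_inj.mp h
    intro j
    rcases eq_or_ne j i with rfl | hj
    · simpa using hc
    · simpa [Function.update_of_ne hj] using hb j
  · simp at h

lemma cutlo_slab {i t} {b b' : Box n} (h : b' ∈ cutlo i t b) {x} (hx : x ∈ bset b') :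
    x i < t := by
  rw [cutlo] at h
  split_ifs at h with hc
  · obtain rfl : _ = b' := Option.some_inj.mp h
    have := (hx i (mem_univ i)).2
    simpa using lt_of_lt_of_le this (by simp [min_le_right])
  · simp at h

lemma cuthi_slab {i t} {b b' : Box n} (h : b' ∈ cuthi i t b) {x} (hx : x ∈ bset b') :
    t ≤ x i := by
  rw [cuthi] at h
  split_ifs at h with hc
  · obtain rfl : _ = b' := Option.some_inj.mp h
    have := (hx i (mem_univ i)).1
    simp only [Function.update_self] at this
    exact le_trans (le_max_right _ _) this
  · simp at h

lemma prod_update_sub (l u : Fin n → ℝ) (i : Fin n) (m : ℝ) :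
    ∏ j, (Function.update u i m j - l j) = (m - l i) * ∏ j ∈ Finset.univ.erase i, (u j - l j) := by
  have : (fun j => Function.update u i m j - l j) =
      Function.update (fun j => u j - l j) i (m - l i) := by
    funext j
    rcases eq_or_ne j i with rfl | hj
    · simp
    · simp [Function.update_of_ne hj]
  rw [this, Finset.prod_update_of_mem (Finset.mem_univ i), Finset.erase_eq]

lemma prod_update_sub' (l u : Fin n → ℝ) (i : Fin n) (m : ℝ) :
    ∏ j, (u j - Function.update l i m j) = (u i - m) * ∏ j ∈ Finset.univ.erase i, (u j - l j) := by
  have : (fun j => u j - Function.update l i m j) =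
      Function.update (fun j => u j - l j) i (u i - m) := by
    funext j
    rcases eq_or_ne j i with rfl | hj
    · simp
    · simp [Function.update_of_ne hj]
  rw [this, Finset.prod_update_of_mem (Finset.mem_univ i), Finset.erase_eq]

lemma rvol_eq_erase (b : Box n) (i : Fin n) :
    rvol b = (b.2 i - b.1 i) * ∏ j ∈ Finset.univ.erase i, (b.2 j - b.1 j) := by
  rw [rvol, ← Finset.prod_erase_mul Finset.univ _ (Finset.mem_univ i), mul_comm]

lemma cut_rvol {i t} {b : Box n} (hb : nondeg b) :
    (cutlo i t b).elim 0 rvol + (cuthi i t b).elim 0 rvol = rvol b := by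
  rw [cutlo, cuthi]
  rcases le_or_gt t (b.1 i) with h1 | h1
  · rw [if_neg (by simp [min_le_of_right_le h1]; intro h; linarith [hb i]),
      if_pos (by rw [max_eq_left h1]; exact hb i)]
    simp only [Option.elim_some, Option.elim_none, zero_add]
    rw [rvol, rvol]
    congr 1
    funext j
    rcases eq_or_ne j i with rfl | hj
    · simp [max_eq_left h1]
    · simp [Function.update_of_ne hj]
  · rcases le_or_gt (b.2 i) t with h2 | h2
    · rw [if_pos (by rw [min_eq_left h2]; exact hb i),
        if_neg (by rw [max_eq_right (le_trans (hb i).le h2)]; exact not_lt.2 h2)]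
      simp only [Option.elim_some, Option.elim_none, add_zero]
      rw [rvol, rvol]
      congr 1
      funext j
      rcases eq_or_ne j i with rfl | hj
      · simp [min_eq_left h2]
      · simp [Function.update_of_ne hj]
    · rw [if_pos (by rw [min_eq_right h2.le]; exact h1),
        if_pos (by rw [max_eq_right h1.le]; exact h2)]
      simp only [Option.elim_some]
      have e1 : rvol ((b.1, Function.update b.2 i (min (b.2 i) t)) : Box n) =
          (min (b.2 i) t - b.1 i) * ∏ j ∈ Finset.univ.erase i, (b.2 j - b.1 j) :=
        prod_update_sub b.1 b.2 i _
      have e2 : rvol ((Function.update b.1 i (max (b.1 i) t), b.2) : Box n) =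
          (b.2 i - max (b.1 i) t) * ∏ j ∈ Finset.univ.erase i, (b.2 j - b.1 j) :=
        prod_update_sub' b.1 b.2 i _
      rw [e1, e2, rvol_eq_erase b i, min_eq_right h2.le, max_eq_right h1.le, ← add_mul]
      ring_nf




lemma vol_filterMap (f : Box n → Option (Box n)) (L : List (Box n)) :
    vol (L.filterMap f) = (L.map fun b => (f b).elim 0 rvol).sum := by
  induction L with
  | nil => simp [vol]
  | cons b L ih =>
    rw [vol, List.filterMap_cons]
    cases hf : f b with
    | none => simpa [hf, vol] using ih
    | some b' => simp only [List.map_cons, List.sum_cons, hf, Option.elim_some, ← ih, vol,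
        List.map_cons, List.sum_cons]

lemma vol_nonneg {L : List (Box n)} (h : ∀ b ∈ L, nondeg b) : 0 ≤ vol L := by
  refine List.sum_nonneg fun x hx => ?_
  obtain ⟨b, hb, rfl⟩ := List.mem_map.mp hx
  exact (rvol_pos (h b hb)).le

lemma le_vol {L : List (Box n)} (h : ∀ b ∈ L, nondeg b) {b} (hb : b ∈ L) : rvol b ≤ vol L :=
  List.single_le_sum (fun x hx => by
    obtain ⟨c, hc, rfl⟩ := List.mem_map.mp hx; exact (rvol_pos (h c hc)).le) _
    (List.mem_map.mpr ⟨b, hb, rfl⟩)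

lemma vol_pos {L : List (Box n)} (h : ∀ b ∈ L, nondeg b) (hL : L ≠ []) : 0 < vol L := by
  obtain ⟨b, hb⟩ := List.exists_mem_of_ne_nil L hL
  exact lt_of_lt_of_le (rvol_pos (h b hb)) (le_vol h hb)

lemma ne_nil_of_vol_pos {L : List (Box n)} (h : 0 < vol L) : L ≠ [] := by
  rintro rfl; simp [vol] at h

lemma pairwise_filterMap_of {f : Box n → Option (Box n)}
    (hf : ∀ b b', ∀ c ∈ f b, ∀ c' ∈ f b', bset c ⊆ bset b ∧ bset c' ⊆ bset b')
    {L : List (Box n)} (hL : L.Pairwise fun b c => Disjoint (bset b) (bset c)) :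
    (L.filterMap f).Pairwise fun b c => Disjoint (bset b) (bset c) := by
  rw [List.pairwise_filterMap]
  refine hL.imp ?_
  intro a b hab c hc c' hc'
  obtain ⟨h1, h2⟩ := hf a b c hc c' hc'
  exact hab.mono h1 h2

lemma length_filterMap_lt {f : Box n → Option (Box n)} {L : List (Box n)}
    {b} (hb : b ∈ L) (hfb : f b = none) : (L.filterMap f).length < L.length := by
  induction L with
  | nil => simp at hb
  | cons a L ih =>
    rw [List.filterMap_cons]
    rcases List.mem_cons.mp hb with rfl | hb'
    · rw [hfb]
      simpa using Nat.lt_succ_of_le (List.length_filterMap_le f L)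
    · cases hf : f a with
      | none => exact Nat.lt_succ_of_lt (ih hb')
      | some c => simpa using ih hb'

lemma filterMap_eq_self {f : Box n → Option (Box n)} {L : List (Box n)}
    (h : ∀ b ∈ L, f b = some b) : L.filterMap f = L := by
  induction L with
  | nil => simp
  | cons a L ih =>
    rw [List.filterMap_cons, h a (List.mem_cons_self), ih fun b hb => h b (List.mem_cons_of_mem a hb)]



lemma exists_sep {b c : Box n} (hb : nondeg b) (hc : nondeg c)
    (hd : Disjoint (bset b) (bset c)) :
    ∃ i, b.2 i ≤ c.1 i ∨ c.2 i ≤ b.1 i := by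
  by_contra h
  push_neg at h
  set x : Fin n → ℝ := fun i => max (b.1 i) (c.1 i) with hx
  have hxb : x ∈ bset b := fun i _ =>
    ⟨le_max_left _ _, max_lt (hb i) (h i).1⟩
  have hxc : x ∈ bset c := fun i _ =>
    ⟨le_max_right _ _, max_lt (h i).2 (hc i)⟩
  exact Set.disjoint_left.mp hd hxb hxc

lemma contrib_eq (i : Fin n) (s : ℝ) {b : Box n} (hb : nondeg b) :
    (cutlo i s b).elim 0 rvol =
      (∏ j ∈ Finset.univ.erase i, (b.2 j - b.1 j)) * max (min (b.2 i) s - b.1 i) 0 := by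
  rw [cutlo]
  split_ifs with hc
  · have : rvol ((b.1, Function.update b.2 i (min (b.2 i) s)) : Box n) =
        (min (b.2 i) s - b.1 i) * ∏ j ∈ Finset.univ.erase i, (b.2 j - b.1 j) :=
      prod_update_sub b.1 b.2 i _
    rw [Option.elim_some, this, max_eq_left (by linarith), mul_comm]
  · rw [Option.elim_none, max_eq_right (by push_neg at hc; linarith), mul_zero]

lemma cont_vol_lo (i : Fin n) (L : List (Box n)) (hL : ∀ b ∈ L, nondeg b) :
    Continuous fun s => vol (lo i s L) := by
  have : (fun s => vol (lo i s L)) = fun s =>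
      (L.map fun b => (∏ j ∈ Finset.univ.erase i, (b.2 j - b.1 j)) *
        max (min (b.2 i) s - b.1 i) 0).sum := by
    funext s
    rw [lo, vol_filterMap]
    congr 1
    exact List.map_congr_left fun b hb => contrib_eq i s (hL b hb)
  rw [this]
  clear hL this
  induction L with
  | nil => simpa using continuous_const
  | cons b L ih =>
    simp only [List.map_cons, List.sum_cons]
    exact (continuous_const.mul ((((continuous_const.min continuous_id).sub
      continuous_const).max continuous_const))).add ih

lemma vol_lo_low {i : Fin n} {L : List (Box n)} (hL : ∀ b ∈ L, nondeg b) {s : ℝ}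
    (hs : ∀ b ∈ L, s ≤ b.1 i) : vol (lo i s L) = 0 := by
  rw [lo, vol_filterMap]
  refine List.sum_eq_zero fun x hx => ?_
  obtain ⟨b, hb, rfl⟩ := List.mem_map.mp hx
  rw [contrib_eq i s (hL b hb), max_eq_right (by
    have := hs b hb
    have := min_le_right (b.2 i) s
    linarith), mul_zero]

lemma vol_lo_high {i : Fin n} {L : List (Box n)} (hL : ∀ b ∈ L, nondeg b) {s : ℝ}
    (hs : ∀ b ∈ L, b.2 i ≤ s) : lo i s L = L := by
  rw [lo]
  induction L with
  | nil => simp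
  | cons b L ih =>
    have h1 : min (b.2 i) s = b.2 i := min_eq_left (hs b (List.mem_cons_self))
    rw [List.filterMap_cons]
    rw [cutlo, h1]
    rw [if_pos (hL b (List.mem_cons_self) i), Function.update_eq_self,
      ih (fun c hc => hL c (List.mem_cons_of_mem b hc))
        (fun c hc => hs c (List.mem_cons_of_mem b hc))]

lemma bunion_add_bunion_eq (F G : List (Box n)) :
    bunion F + bunion G = ⋃ b ∈ {b | b ∈ F}, ⋃ c ∈ {c | c ∈ G}, (bset b + bset c) := by
  ext x
  simp only [Set.mem_add, mem_bunion, mem_iUnion, mem_setOf_eq, exists_prop]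
  constructor
  · rintro ⟨p, ⟨b, hb, hpb⟩, q, ⟨c, hc, hqc⟩, rfl⟩
    exact ⟨b, hb, c, hc, p, hpb, q, hqc, rfl⟩
  · rintro ⟨b, hb, c, hc, p, hpb, q, hqc, rfl⟩
    exact ⟨p, ⟨b, hb, hpb⟩, q, ⟨c, hc, hqc⟩, rfl⟩

lemma measurable_bunion_add (F G : List (Box n)) (hF : ∀ b ∈ F, nondeg b)
    (hG : ∀ c ∈ G, nondeg c) : MeasurableSet (bunion F + bunion G) := by
  rw [bunion_add_bunion_eq]
  refine MeasurableSet.biUnion (F.finite_toSet).countable fun b hb => ?_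
  refine MeasurableSet.biUnion (G.finite_toSet).countable fun c hc => ?_
  rw [bset_add_bset (hF b hb) (hG c hc)]
  exact bset_measurable _

lemma bunion_sub_add_sub {F F' G G' : List (Box n)}
    (hF : ∀ b ∈ F', ∃ c ∈ F, bset b ⊆ bset c) (hG : ∀ b ∈ G', ∃ c ∈ G, bset b ⊆ bset c) :
    bunion F' + bunion G' ⊆ bunion F + bunion G := by
  refine Set.add_subset_add ?_ ?_ <;>
  · intro x hx
    rw [mem_bunion] at hx ⊢
    obtain ⟨b, hb, hxb⟩ := hx
    first
      | (obtain ⟨c, hc, hsub⟩ := hF b hb; exact ⟨c, hc, hsub hxb⟩)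
      | (obtain ⟨c, hc, hsub⟩ := hG b hb; exact ⟨c, hc, hsub hxb⟩)


noncomputable def Good (F G : List (Box n)) : Prop :=
  ENNReal.ofReal (phi n (vol F) (vol G)) ≤ volume (bunion F + bunion G)

-- derived


lemma lo_nondeg {i t} {L : List (Box n)} (hL : ∀ b ∈ L, nondeg b) :
    ∀ b' ∈ lo i t L, nondeg b' := fun b' h => by
  obtain ⟨b, hb, hc⟩ := List.mem_filterMap.mp h
  exact cutlo_nondeg (hL b hb) hc

lemma hi_nondeg {i t} {L : List (Box n)} (hL : ∀ b ∈ L, nondeg b) :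
    ∀ b' ∈ hi i t L, nondeg b' := fun b' h => by
  obtain ⟨b, hb, hc⟩ := List.mem_filterMap.mp h
  exact cuthi_nondeg (hL b hb) hc

lemma lo_pairwise {i t} {L : List (Box n)}
    (hL : L.Pairwise fun b c => Disjoint (bset b) (bset c)) :
    (lo i t L).Pairwise fun b c => Disjoint (bset b) (bset c) :=
  pairwise_filterMap_of (fun _ _ c hc c' hc' => ⟨cutlo_sub hc, cutlo_sub hc'⟩) hL

lemma hi_pairwise {i t} {L : List (Box n)}
    (hL : L.Pairwise fun b c => Disjoint (bset b) (bset c)) :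
    (hi i t L).Pairwise fun b c => Disjoint (bset b) (bset c) :=
  pairwise_filterMap_of (fun _ _ c hc c' hc' => ⟨cuthi_sub hc, cuthi_sub hc'⟩) hL

lemma lo_sub {i t} {L : List (Box n)} : ∀ b' ∈ lo i t L, ∃ b ∈ L, bset b' ⊆ bset b :=
  fun b' h => by
    obtain ⟨b, hb, hc⟩ := List.mem_filterMap.mp h
    exact ⟨b, hb, cutlo_sub hc⟩

lemma hi_sub {i t} {L : List (Box n)} : ∀ b' ∈ hi i t L, ∃ b ∈ L, bset b' ⊆ bset b :=
  fun b' h => by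
    obtain ⟨b, hb, hc⟩ := List.mem_filterMap.mp h
    exact ⟨b, hb, cuthi_sub hc⟩

lemma lo_slab {i t} {L : List (Box n)} {x} (hx : x ∈ bunion (lo i t L)) : x i < t := by
  obtain ⟨b', h, hxb⟩ := mem_bunion.mp hx
  obtain ⟨b, hb, hc⟩ := List.mem_filterMap.mp h
  exact cutlo_slab hc hxb

lemma hi_slab {i t} {L : List (Box n)} {x} (hx : x ∈ bunion (hi i t L)) : t ≤ x i := by
  obtain ⟨b', h, hxb⟩ := mem_bunion.mp hx
  obtain ⟨b, hb, hc⟩ := List.mem_filterMap.mp h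
  exact cuthi_slab hc hxb

lemma vol_lo_add_hi (i : Fin n) (t : ℝ) {L : List (Box n)} (hL : ∀ b ∈ L, nondeg b) :
    vol (lo i t L) + vol (hi i t L) = vol L := by
  rw [lo, hi, vol_filterMap, vol_filterMap]
  induction L with
  | nil => simp [vol]
  | cons b L ih =>
    simp only [List.map_cons, List.sum_cons, vol]
    have := ih fun c hc => hL c (List.mem_cons_of_mem b hc)
    rw [vol] at this
    rw [← cut_rvol (t := t) (i := i) (hL b (List.mem_cons_self))]
    push_cast
    linarith [this]

lemma exists_lb (f : Box n → ℝ) (L : List (Box n)) : ∃ s, ∀ b ∈ L, s ≤ f b := by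
  induction L with
  | nil => exact ⟨0, by simp⟩
  | cons b L ih =>
    obtain ⟨s, hs⟩ := ih
    exact ⟨min s (f b), fun c hc => by
      rcases List.mem_cons.mp hc with rfl | hc'
      · exact min_le_right _ _
      · exact le_trans (min_le_left _ _) (hs c hc')⟩

lemma exists_ub (f : Box n → ℝ) (L : List (Box n)) : ∃ s, ∀ b ∈ L, f b ≤ s := by
  obtain ⟨s, hs⟩ := exists_lb (fun b => -f b) L
  exact ⟨-s, fun c hc => by linarith [hs c hc]⟩

-- the splitting step
lemma step (hn : 0 < n) {m : ℕ}
    (IH : ∀ F G : List (Box n), F ≠ [] → G ≠ [] → (∀ b ∈ F, nondeg b) → (∀ b ∈ G, nondeg b) →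
      F.Pairwise (fun b c => Disjoint (bset b) (bset c)) →
      G.Pairwise (fun b c => Disjoint (bset b) (bset c)) →
      F.length + G.length ≤ m → Good F G)
    {F G : List (Box n)} (hGne : G ≠ []) (hFnd : ∀ b ∈ F, nondeg b)
    (hGnd : ∀ b ∈ G, nondeg b)
    (hFp : F.Pairwise fun b c => Disjoint (bset b) (bset c))
    (hGp : G.Pairwise fun b c => Disjoint (bset b) (bset c))
    (hlen : F.length + G.length ≤ m + 1) (h2 : 2 ≤ F.length) : Good F G := by
  -- find two separated boxes in F
  obtain ⟨i, t, blo, hbloF, hble, bhi, hbhiF, hbge⟩ :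
      ∃ i t, ∃ blo ∈ F, blo.2 i ≤ t ∧ ∃ bhi ∈ F, t ≤ bhi.1 i := by
    match F, h2, hFp with
    | b1 :: b2 :: T, _, hp =>
      have hd : Disjoint (bset b1) (bset b2) :=
        (List.pairwise_cons.mp hp).1 b2 (List.mem_cons_self)
      have hb1 : nondeg b1 := hFnd b1 (List.mem_cons_self)
      have hb2 : nondeg b2 := hFnd b2 (List.mem_cons_of_mem _ (List.mem_cons_self))
      obtain ⟨i, h | h⟩ := exists_sep hb1 hb2 hd
      · exact ⟨i, b1.2 i, b1, List.mem_cons_self, le_rfl,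
          b2, List.mem_cons_of_mem _ (List.mem_cons_self), h⟩
      · exact ⟨i, b2.2 i, b2, List.mem_cons_of_mem _ (List.mem_cons_self), le_rfl,
          b1, List.mem_cons_self, h⟩
  set Fl := lo i t F with hFl
  set Fh := hi i t F with hFh
  -- cut results on the witnesses
  have hcut_bhi_lo : cutlo i t bhi = none := by
    rw [cutlo, if_neg]
    push_neg
    exact le_trans (min_le_right _ _) hbge
  have hcut_blo_hi : cuthi i t blo = none := by
    rw [cuthi, if_neg]
    push_neg
    exact le_trans hble (le_max_right _ _)
  have hcut_blo_lo : cutlo i t blo = some (blo.1, Function.update blo.2 i (min (blo.2 i) t)) := by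
    rw [cutlo, if_pos]
    rw [min_eq_left hble]
    exact hFnd blo hbloF i
  have hcut_bhi_hi : cuthi i t bhi = some (Function.update bhi.1 i (max (bhi.1 i) t), bhi.2) := by
    rw [cuthi, if_pos]
    rw [max_eq_left hbge]
    exact hFnd bhi hbhiF i
  have hFlnd := lo_nondeg (i := i) (t := t) hFnd
  have hFhnd := hi_nondeg (i := i) (t := t) hFnd
  have hvFl : 0 < vol Fl := by
    have hmem : (blo.1, Function.update blo.2 i (min (blo.2 i) t)) ∈ Fl :=
      List.mem_filterMap.mpr ⟨blo, hbloF, hcut_blo_lo⟩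
    exact lt_of_lt_of_le (rvol_pos (hFlnd _ hmem)) (le_vol hFlnd hmem)
  have hvFh : 0 < vol Fh := by
    have hmem : (Function.update bhi.1 i (max (bhi.1 i) t), bhi.2) ∈ Fh :=
      List.mem_filterMap.mpr ⟨bhi, hbhiF, hcut_bhi_hi⟩
    exact lt_of_lt_of_le (rvol_pos (hFhnd _ hmem)) (le_vol hFhnd hmem)
  have hvF : vol Fl + vol Fh = vol F := vol_lo_add_hi i t hFnd
  have hvFpos : 0 < vol F := by linarith
  have hvG : 0 < vol G := vol_pos hGnd hGne
  set θ := vol Fl / vol F with hθ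
  have hθ0 : 0 < θ := div_pos hvFl hvFpos
  have hθ1 : θ < 1 := (div_lt_one hvFpos).mpr (by linarith)
  -- IVT to find cut position for G
  obtain ⟨s₀, hs₀⟩ := exists_lb (fun b => b.1 i) G
  obtain ⟨s₁, hs₁⟩ := exists_ub (fun b => b.2 i) G
  obtain ⟨g0, hg0⟩ := List.exists_mem_of_ne_nil G hGne
  have hs01 : s₀ ≤ s₁ :=
    le_trans (hs₀ g0 hg0) (le_trans (hGnd g0 hg0 i).le (hs₁ g0 hg0))
  have hcont := cont_vol_lo i G hGnd
  have hivt := intermediate_value_Icc hs01 hcont.continuousOn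
  have hmemIcc : θ * vol G ∈ Icc (vol (lo i s₀ G)) (vol (lo i s₁ G)) := by
    rw [vol_lo_low hGnd hs₀, vol_lo_high hGnd hs₁]
    constructor
    · positivity
    · nlinarith
  obtain ⟨s, _, hgs⟩ := hivt hmemIcc
  set Gl := lo i s G with hGl
  set Gh := hi i s G with hGh
  have hGlnd := lo_nondeg (i := i) (t := s) hGnd
  have hGhnd := hi_nondeg (i := i) (t := s) hGnd
  have hvGl : vol Gl = θ * vol G := hgs
  have hvGsum : vol Gl + vol Gh = vol G := vol_lo_add_hi i s hGnd
  have hvGh : vol Gh = (1 - θ) * vol G := by linarith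
  have hvGlpos : 0 < vol Gl := by rw [hvGl]; positivity
  have hvGhpos : 0 < vol Gh := by rw [hvGh]; nlinarith
  -- nonemptiness
  have hFlne : Fl ≠ [] := ne_nil_of_vol_pos hvFl
  have hFhne : Fh ≠ [] := ne_nil_of_vol_pos hvFh
  have hGlne : Gl ≠ [] := ne_nil_of_vol_pos hvGlpos
  have hGhne : Gh ≠ [] := ne_nil_of_vol_pos hvGhpos
  -- lengths
  have hFllen : Fl.length < F.length := length_filterMap_lt hbhiF hcut_bhi_lo
  have hFhlen : Fh.length < F.length := length_filterMap_lt hbloF hcut_blo_hi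
  have hGllen : Gl.length ≤ G.length := List.length_filterMap_le _ _
  have hGhlen : Gh.length ≤ G.length := List.length_filterMap_le _ _
  -- apply IH
  have hlow : Good Fl Gl := IH Fl Gl hFlne hGlne hFlnd hGlnd
    (lo_pairwise hFp) (lo_pairwise hGp) (by omega)
  have hhigh : Good Fh Gh := IH Fh Gh hFhne hGhne hFhnd hGhnd
    (hi_pairwise hFp) (hi_pairwise hGp) (by omega)
  -- volume identities
  have hvFl' : vol Fl = θ * vol F := by
    rw [hθ, div_mul_cancel₀ _ hvFpos.ne']
  have hvFh' : vol Fh = (1 - θ) * vol F := by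
    rw [sub_mul, one_mul, ← hvFl']; linarith
  -- phi identities
  have hphi_lo : phi n (vol Fl) (vol Gl) = θ * phi n (vol F) (vol G) := by
    rw [hvFl', hvGl, phi_smul hn hθ0.le hvFpos.le hvG.le]
  have hphi_hi : phi n (vol Fh) (vol Gh) = (1 - θ) * phi n (vol F) (vol G) := by
    rw [hvFh', hvGh, phi_smul hn (by linarith) hvFpos.le hvG.le]
  -- disjointness of the two halves
  have hslab_lo : bunion Fl + bunion Gl ⊆ {x | x i < t + s} := by
    rintro x ⟨p, hp, q, hq, rfl⟩
    have h1 : p i < t := lo_slab hp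
    have h2 : q i < s := lo_slab hq
    simpa using add_lt_add h1 h2
  have hslab_hi : bunion Fh + bunion Gh ⊆ {x | t + s ≤ x i} := by
    rintro x ⟨p, hp, q, hq, rfl⟩
    have h1 : t ≤ p i := hi_slab hp
    have h2 : s ≤ q i := hi_slab hq
    simpa using add_le_add h1 h2
  have hdisj : Disjoint (bunion Fl + bunion Gl) (bunion Fh + bunion Gh) := by
    refine Set.disjoint_left.mpr fun x h1 h2 => ?_
    have l1 : x i < t + s := hslab_lo h1
    have l2 : t + s ≤ x i := hslab_hi h2
    exact absurd l1 (not_lt.mpr l2)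
  have hphinn : 0 ≤ phi n (vol F) (vol G) := phi_nonneg hvFpos.le hvG.le
  -- combine
  have main : ENNReal.ofReal (phi n (vol F) (vol G)) ≤
      volume ((bunion Fl + bunion Gl) ∪ (bunion Fh + bunion Gh)) := by
    rw [measure_union hdisj (measurable_bunion_add Fh Gh hFhnd hGhnd)]
    calc ENNReal.ofReal (phi n (vol F) (vol G))
        = ENNReal.ofReal (θ * phi n (vol F) (vol G)) +
          ENNReal.ofReal ((1 - θ) * phi n (vol F) (vol G)) := by
          rw [← ENNReal.ofReal_add (mul_nonneg hθ0.le hphinn)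
            (mul_nonneg (by linarith) hphinn)]
          congr 1
          ring
      _ = ENNReal.ofReal (phi n (vol Fl) (vol Gl)) +
          ENNReal.ofReal (phi n (vol Fh) (vol Gh)) := by rw [hphi_lo, hphi_hi]
      _ ≤ _ := add_le_add hlow hhigh
  refine le_trans main (measure_mono ?_)
  exact Set.union_subset (bunion_sub_add_sub lo_sub lo_sub) (bunion_sub_add_sub hi_sub hi_sub)

lemma bunion_singleton (b : Box n) : bunion [b] = bset b := by
  ext x
  rw [mem_bunion]
  simp

lemma vol_singleton (b : Box n) : vol [b] = rvol b := by simp [vol]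

lemma base (hn : 0 < n) {b c : Box n} (hb : nondeg b) (hc : nondeg c) :
    Good [b] [c] := by
  rw [Good, bunion_singleton, bunion_singleton, vol_singleton, vol_singleton,
    bset_add_bset hb hc, volume_bset (fun i => add_lt_add (hb i) (hc i))]
  refine ENNReal.ofReal_le_ofReal ?_
  have : rvol ((b.1 + c.1, b.2 + c.2) : Box n) =
      ∏ i, ((b.2 i - b.1 i) + (c.2 i - c.1 i)) := by
    rw [rvol]
    exact Finset.prod_congr rfl fun i _ => by simp; ring
  rw [this, rvol, rvol]
  exact phi_prod_le hn (fun i => sub_pos.2 (hb i)) (fun i => sub_pos.2 (hc i))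

lemma good_symm {F G : List (Box n)} (h : Good G F) : Good F G := by
  rw [Good, phi] at h ⊢
  rw [add_comm (vol F ^ (n:ℝ)⁻¹), add_comm (bunion F)]
  exact h

lemma key (hn : 0 < n) : ∀ m : ℕ, ∀ F G : List (Box n), F ≠ [] → G ≠ [] →
    (∀ b ∈ F, nondeg b) → (∀ b ∈ G, nondeg b) →
    F.Pairwise (fun b c => Disjoint (bset b) (bset c)) →
    G.Pairwise (fun b c => Disjoint (bset b) (bset c)) →
    F.length + G.length ≤ m → Good F G := by
  intro m
  induction m with
  | zero =>
    intro F G hFne _ _ _ _ _ hlen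
    have := List.length_pos_iff.mpr hFne
    omega
  | succ m ih =>
    intro F G hFne hGne hFnd hGnd hFp hGp hlen
    rcases Nat.lt_or_ge F.length 2 with hF1 | hF2
    · rcases Nat.lt_or_ge G.length 2 with hG1 | hG2
      · have hF : F.length = 1 := by
          have := List.length_pos_iff.mpr hFne; omega
        have hG : G.length = 1 := by
          have := List.length_pos_iff.mpr hGne; omega
        obtain ⟨b, rfl⟩ := List.length_eq_one_iff.mp hF
        obtain ⟨c, rfl⟩ := List.length_eq_one_iff.mp hG
        exact base hn (hFnd b (List.mem_cons_self)) (hGnd c (List.mem_cons_self))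
      · refine good_symm (step hn ih hFne hGnd hFnd hGp hFp (by omega) hG2)
    · exact step hn ih hGne hFnd hGnd hFp hGp hlen hF2

noncomputable def cube (a : Fin n → ℤ) : Box n := (fun i => (a i : ℝ), fun i => (a i : ℝ) + 1)

lemma cube_nondeg (a : Fin n → ℤ) : nondeg (cube a) := fun i => by simp [cube]

lemma rvol_cube (a : Fin n → ℤ) : rvol (cube a) = 1 := by simp [rvol, cube]

lemma mem_cube {a : Fin n → ℤ} {x : Fin n → ℝ} :
    x ∈ bset (cube a) ↔ ∀ i, (a i : ℝ) ≤ x i ∧ x i < a i + 1 := by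
  constructor
  · intro h i; exact h i (mem_univ i)
  · intro h i _; exact h i

lemma cube_disjoint {a a' : Fin n → ℤ} (h : a ≠ a') :
    Disjoint (bset (cube a)) (bset (cube a')) := by
  refine Set.disjoint_left.mpr fun x hx hx' => h (funext fun i => ?_)
  obtain ⟨h1, h2⟩ := mem_cube.mp hx i
  obtain ⟨h3, h4⟩ := mem_cube.mp hx' i
  have e1 : (a i : ℝ) < (a' i : ℝ) + 1 := lt_of_le_of_lt h1 h4
  have e2 : (a' i : ℝ) < (a i : ℝ) + 1 := lt_of_le_of_lt h3 h2
  have : a i < a' i + 1 := by exact_mod_cast e1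
  have : a' i < a i + 1 := by exact_mod_cast e2
  omega

noncomputable def fam (A : Set (Fin n → ℤ)) (hAf : A.Finite) : List (Box n) :=
  hAf.toFinset.toList.map cube

lemma fam_nondeg {A : Set (Fin n → ℤ)} (hAf : A.Finite) : ∀ b ∈ fam A hAf, nondeg b := by
  intro b hb
  obtain ⟨a, _, rfl⟩ := List.mem_map.mp hb
  exact cube_nondeg a

lemma fam_pairwise {A : Set (Fin n → ℤ)} (hAf : A.Finite) :
    (fam A hAf).Pairwise fun b c => Disjoint (bset b) (bset c) := by
  rw [fam, List.pairwise_map]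
  exact (Finset.nodup_toList _).imp fun h => cube_disjoint h

lemma fam_ne_nil {A : Set (Fin n → ℤ)} (hAf : A.Finite) (hA : A.Nonempty) :
    fam A hAf ≠ [] := by
  rw [fam]
  simp only [ne_eq, List.map_eq_nil_iff, Finset.toList_eq_nil]
  rw [Set.Finite.toFinset_eq_empty]
  exact hA.ne_empty

lemma fam_vol {A : Set (Fin n → ℤ)} (hAf : A.Finite) : vol (fam A hAf) = A.ncard := by
  rw [fam, vol, List.map_map]
  have : rvol ∘ cube = fun _ : Fin n → ℤ => (1:ℝ) := funext fun a => rvol_cube a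
  rw [this, List.map_const', List.sum_replicate, nsmul_eq_mul, mul_one,
    Finset.length_toList, Set.ncard_eq_toFinset_card A hAf]

lemma mem_fam {A : Set (Fin n → ℤ)} (hAf : A.Finite) {b : Box n} :
    b ∈ fam A hAf ↔ ∃ a ∈ A, cube a = b := by
  rw [fam, List.mem_map]
  constructor
  · rintro ⟨a, ha, rfl⟩
    exact ⟨a, by simpa using (Finset.mem_toList.mp ha), rfl⟩
  · rintro ⟨a, ha, rfl⟩
    exact ⟨a, Finset.mem_toList.mpr (hAf.mem_toFinset.mpr ha), rfl⟩

theorem main (hn : 0 < n) (A B : Set (Fin n → ℤ))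
    (hA : A.Nonempty) (hB : B.Nonempty) (hAf : A.Finite) (hBf : B.Finite) :
    ((A + B + {v : Fin n → ℤ | ∀ i, v i = 0 ∨ v i = 1}).ncard : ℝ) ^ ((1 : ℝ) / n) ≥
      (A.ncard : ℝ) ^ ((1 : ℝ) / n) + (B.ncard : ℝ) ^ ((1 : ℝ) / n) := by
  classical
  set Q : Set (Fin n → ℤ) := {v : Fin n → ℤ | ∀ i, v i = 0 ∨ v i = 1} with hQ
  have hQf : Q.Finite := by
    refine Set.Finite.subset (Set.Finite.pi fun i : Fin n =>
      (Set.finite_singleton (1:ℤ)).insert 0) ?_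
    intro v hv
    intro i _
    rcases hv i with h | h <;> simp [h]
  have hDf : (A + B + Q).Finite := (hAf.add hBf).add hQf
  set F := fam A hAf with hF
  set G := fam B hBf with hG
  have hGood : Good F G := key hn (F.length + G.length) F G
    (fam_ne_nil hAf hA) (fam_ne_nil hBf hB) (fam_nondeg hAf) (fam_nondeg hBf)
    (fam_pairwise hAf) (fam_pairwise hBf) le_rfl
  rw [Good, fam_vol hAf, fam_vol hBf] at hGood
  -- cover the sumset by cubes over A+B+Q
  have hcover : bunion F + bunion G ⊆ ⋃ d ∈ hDf.toFinset, bset (cube d) := by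
    rintro x ⟨p, hp, q, hq, rfl⟩
    obtain ⟨bA, hbA, hpA⟩ := mem_bunion.mp hp
    obtain ⟨a, haA, rfl⟩ := (mem_fam hAf).mp hbA
    obtain ⟨bB, hbB, hqB⟩ := mem_bunion.mp hq
    obtain ⟨b, hbB', rfl⟩ := (mem_fam hBf).mp hbB
    set e : Fin n → ℤ := fun i => if p i + q i < (a i : ℝ) + b i + 1 then 0 else 1 with he
    have heQ : e ∈ Q := by
      intro i
      by_cases hci : p i + q i < (a i : ℝ) + b i + 1
      · exact Or.inl (if_pos hci)
      · exact Or.inr (if_neg hci)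
    have hd : a + b + e ∈ A + B + Q := Set.add_mem_add (Set.add_mem_add haA hbB') heQ
    refine mem_iUnion₂.mpr ⟨a + b + e, hDf.mem_toFinset.mpr hd, ?_⟩
    rw [mem_cube]
    intro i
    obtain ⟨h1, h2⟩ := mem_cube.mp hpA i
    obtain ⟨h3, h4⟩ := mem_cube.mp hqB i
    simp only [Pi.add_apply, Int.cast_add]
    by_cases hcase : p i + q i < (a i : ℝ) + b i + 1
    · rw [show e i = 0 from if_pos hcase]
      push_cast
      constructor <;> linarith
    · rw [show e i = 1 from if_neg hcase]
      push_cast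
      constructor <;> linarith
  have hvol_le : volume (⋃ d ∈ hDf.toFinset, bset (cube d)) ≤
      ((A + B + Q).ncard : ℝ≥0∞) := by
    refine le_trans (measure_biUnion_finset_le _ _) ?_
    have : ∀ d ∈ hDf.toFinset, volume (bset (cube d)) = 1 := fun d _ => by
      rw [volume_bset (cube_nondeg d), rvol_cube, ENNReal.ofReal_one]
    rw [Finset.sum_congr rfl this, Finset.sum_const, nsmul_eq_mul, mul_one,
      Set.ncard_eq_toFinset_card _ hDf]
  have hmain : ENNReal.ofReal (phi n A.ncard B.ncard) ≤
      ENNReal.ofReal (((A + B + Q).ncard : ℝ)) := by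
    rw [ENNReal.ofReal_natCast]
    exact le_trans hGood (le_trans (measure_mono hcover) hvol_le)
  have hreal : phi n A.ncard B.ncard ≤ ((A + B + Q).ncard : ℝ) :=
    (ENNReal.ofReal_le_ofReal_iff (Nat.cast_nonneg _)).mp hmain
  rw [ge_iff_le, one_div]
  calc (A.ncard : ℝ) ^ (n:ℝ)⁻¹ + (B.ncard : ℝ) ^ (n:ℝ)⁻¹
      = phi n A.ncard B.ncard ^ (n:ℝ)⁻¹ :=
        (rpow_inv_phi hn (Nat.cast_nonneg _) (Nat.cast_nonneg _)).symm
    _ ≤ ((A + B + Q).ncard : ℝ) ^ (n:ℝ)⁻¹ :=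
        Real.rpow_le_rpow (phi_nonneg (Nat.cast_nonneg _) (Nat.cast_nonneg _)) hreal
          (inv_nonneg.mpr (Nat.cast_nonneg _))


end BM18

theorem stmt18 (n : ℕ) (hn : 0 < n) (A B : Set (Fin n → ℤ))
    (hA : A.Nonempty) (hB : B.Nonempty) (hAf : A.Finite) (hBf : B.Finite) :
    ((A + B + {v : Fin n → ℤ | ∀ i, v i = 0 ∨ v i = 1}).ncard : ℝ) ^ ((1 : ℝ) / n) ≥
      (A.ncard : ℝ) ^ ((1 : ℝ) / n) + (B.ncard : ℝ) ^ ((1 : ℝ) / n) := by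
  exact BM18.main hn A B hA hB hAf hBf
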